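/- Let (p_n) be non-decreasing positive with P_n = Σ_{k=0}^n p_k, α ≥ 1, and k ≤ n. Then Σ_{j=1}^k ((1 − (P_{n-j}/P_n)^α)² ≤ α² (p_n/P_n)² · Σ_{j=1}^k j² ≤ α² (k³/n²) (n p_n/P_n)². -/

import Mathlib

open Finset

/-- With P n = p_0 + ⋯ + p_n, non-decreasing positive p, α ≥ 1 and 1 ≤ k ≤ n:
Σ_{j=1}^k (1 − (P_{n-j}/P_n)^α)² ≤ α²(p_n/P_n)² Σ_{j=1}^k j²
  ≤ α²(k³/n²)(n p_n/P_n)². -/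
theorem coeff_sum_bound (p : ℕ → ℝ) (hp : ∀ n, 0 < p n) (hmono : Monotone p)
    (P : ℕ → ℝ) (hP : ∀ n, P n = ∑ k ∈ Finset.range (n + 1), p k)
    (α : ℝ) (hα : 1 ≤ α) (k n : ℕ) (hk : 1 ≤ k) (hkn : k ≤ n) :
    (∑ j ∈ Finset.Icc 1 k, (1 - (P (n - j) / P n) ^ α) ^ 2 ≤
        α ^ 2 * (p n / P n) ^ 2 * ∑ j ∈ Finset.Icc 1 k, (j : ℝ) ^ 2) ∧
      α ^ 2 * (p n / P n) ^ 2 * ∑ j ∈ Finset.Icc 1 k, (j : ℝ) ^ 2 ≤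
        α ^ 2 * ((k : ℝ) ^ 3 / (n : ℝ) ^ 2) * ((n : ℝ) * p n / P n) ^ 2 := by
  have hn : 1 ≤ n := hk.trans hkn
  have hPpos : ∀ m, 0 < P m := by
    intro m; rw [hP]; exact Finset.sum_pos (fun i _ => hp i) (by simp)
  have hPn := hPpos n
  constructor
  · have key : ∀ j ∈ Finset.Icc 1 k,
        (1 - (P (n - j) / P n) ^ α) ^ 2 ≤ (α * (p n / P n)) ^ 2 * (j : ℝ) ^ 2 := by
      intro j hj
      obtain ⟨hj1, hjk⟩ := Finset.mem_Icc.mp hj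
      have hjn : j ≤ n := hjk.trans hkn
      set x := P (n - j) / P n with hx
      have hx0 : 0 < x := div_pos (hPpos _) hPn
      have hPle : P (n - j) ≤ P n := by
        rw [hP, hP]
        apply Finset.sum_le_sum_of_subset_of_nonneg
        · exact Finset.range_subset_range.mpr (by omega)
        · intro i _ _; exact (hp i).le
      have hx1 : x ≤ 1 := (div_le_one hPn).mpr hPle
      have hpow : 1 + α * (x - 1) ≤ x ^ α := by
        have := one_add_mul_self_le_rpow_one_add (s := x - 1) (by linarith) hα
        rwa [show (1 : ℝ) + (x - 1) = x by ring] at this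
      have hxα1 : x ^ α ≤ 1 := Real.rpow_le_one hx0.le hx1 (by linarith)
      have hdiff : P n - P (n - j) ≤ (j : ℝ) * p n := by
        rw [hP, hP]
        rw [← Finset.sum_Ico_eq_sub _ (by omega : n - j + 1 ≤ n + 1)]
        calc ∑ i ∈ Finset.Ico (n - j + 1) (n + 1), p i
            ≤ (Finset.Ico (n - j + 1) (n + 1)).card • p n := by
              apply Finset.sum_le_card_nsmul
              intro i hi
              exact hmono (by simp at hi; omega)
          _ = (j : ℝ) * p n := by
              rw [Nat.card_Ico, nsmul_eq_mul]
              congr 1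
              have : n + 1 - (n - j + 1) = j := by omega
              rw [this]
      have h1x : 1 - x ≤ (j : ℝ) * p n / P n := by
        rw [hx]
        rw [sub_div' hPn.ne', div_le_div_iff₀ hPn hPn]
        have : (0 : ℝ) < P n := hPn
        nlinarith
      have hub : 1 - x ^ α ≤ α * (p n / P n) * j := by
        have h1 : 1 - x ^ α ≤ α * (1 - x) := by linarith
        have h2 : α * (1 - x) ≤ α * ((j : ℝ) * p n / P n) :=
          mul_le_mul_of_nonneg_left h1x (by linarith)
        calc 1 - x ^ α ≤ α * ((j : ℝ) * p n / P n) := h1.trans h2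
          _ = α * (p n / P n) * j := by ring
      have hlb : 0 ≤ 1 - x ^ α := by linarith
      calc (1 - x ^ α) ^ 2 ≤ (α * (p n / P n) * j) ^ 2 := by
            apply pow_le_pow_left₀ hlb hub
        _ = (α * (p n / P n)) ^ 2 * (j : ℝ) ^ 2 := by ring
    calc ∑ j ∈ Finset.Icc 1 k, (1 - (P (n - j) / P n) ^ α) ^ 2
        ≤ ∑ j ∈ Finset.Icc 1 k, (α * (p n / P n)) ^ 2 * (j : ℝ) ^ 2 :=
          Finset.sum_le_sum key
      _ = α ^ 2 * (p n / P n) ^ 2 * ∑ j ∈ Finset.Icc 1 k, (j : ℝ) ^ 2 := by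
          rw [← Finset.mul_sum]; ring_nf
  · have hsum : ∑ j ∈ Finset.Icc 1 k, (j : ℝ) ^ 2 ≤ (k : ℝ) ^ 3 := by
      calc ∑ j ∈ Finset.Icc 1 k, (j : ℝ) ^ 2
          ≤ (Finset.Icc 1 k).card • ((k : ℝ) ^ 2) := by
            apply Finset.sum_le_card_nsmul
            intro j hj
            obtain ⟨_, hjk⟩ := Finset.mem_Icc.mp hj
            have : (j : ℝ) ≤ k := Nat.cast_le.mpr hjk
            have : (0 : ℝ) ≤ j := Nat.cast_nonneg j
            nlinarith
        _ = (k : ℝ) * (k : ℝ) ^ 2 := by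
            rw [Nat.card_Icc, nsmul_eq_mul]
            simp
        _ = (k : ℝ) ^ 3 := by ring
    have hnpos : (0 : ℝ) < n := by exact_mod_cast hn
    have hrhs : α ^ 2 * ((k : ℝ) ^ 3 / (n : ℝ) ^ 2) * ((n : ℝ) * p n / P n) ^ 2
        = α ^ 2 * (p n / P n) ^ 2 * (k : ℝ) ^ 3 := by
      field_simp
    rw [hrhs]
    apply mul_le_mul_of_nonneg_left hsum
    positivity
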